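/- For every K > 0 there exist constants C₁, C₂ > 0 (depending only on K and on the constants C₁⁰, C₂⁰) such that for every ζ ∈ ℝ with |ζ| ≤ K and every r ∈ (0,1) one has C₁·r(1−r) ≤ F_*^{-1}(F_*(r)+ζ)·[1 − F_*^{-1}(F_*(r)+ζ)] ≤ C₂·r(1−r). -/

import Mathlib

private lemma logistic_deriv {x : ℝ} (hx : x ∈ Set.Ioo (0:ℝ) 1) :
    HasDerivAt (fun y => Real.log y - Real.log (1 - y)) (1/(x*(1-x))) x := by
  have hx0 : x ≠ 0 := ne_of_gt hx.1
  have hx1 : (1:ℝ) - x ≠ 0 := by have := hx.2; intro h; linarith [sub_eq_zero.mp h]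
  have h1 : HasDerivAt Real.log x⁻¹ x := Real.hasDerivAt_log hx0
  have h2 : HasDerivAt (fun y : ℝ => 1 - y) (-1) x := by
    simpa using (hasDerivAt_id x).const_sub (1:ℝ)
  have h3 : HasDerivAt (fun y => Real.log (1 - y)) ((1-x)⁻¹ * (-1)) x :=
    (Real.hasDerivAt_log hx1).comp x h2
  have h4 := h1.sub h3
  refine h4.congr_deriv ?_
  have hx1' : (0:ℝ) < 1 - x := by linarith [hx.2]
  field_simp
  ring

private lemma intg_u (u : ℝ → ℝ) (hu : ContinuousOn u (Set.Icc 0 1))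
    (hne : ∀ x ∈ Set.Ioo (0:ℝ) 1, u x ≠ 0)
    {a b : ℝ} (ha : a ∈ Set.Ioo (0:ℝ) 1) (hb : b ∈ Set.Ioo (0:ℝ) 1) :
    IntervalIntegrable (fun η => 1 / |u η|) MeasureTheory.volume a b := by
  have hsub : Set.uIcc a b ⊆ Set.Ioo 0 1 := Set.ordConnected_Ioo.uIcc_subset ha hb
  apply ContinuousOn.intervalIntegrable
  apply ContinuousOn.div continuousOn_const
  · exact (hu.mono (hsub.trans Set.Ioo_subset_Icc_self)).abs
  · intro x hx
    exact abs_ne_zero.mpr (hne x (hsub hx))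

private lemma key_ineq (u F : ℝ → ℝ) (C10 C20 : ℝ) (hC10 : 0 < C10) (hC20 : 0 < C20)
    (hu : ContinuousOn u (Set.Icc 0 1))
    (hu_lb : ∀ r ∈ Set.Icc (0:ℝ) 1, -C10 * (r * (1 - r)) ≤ u r)
    (hu_ub : ∀ r ∈ Set.Icc (0:ℝ) 1, u r ≤ -C20 * (r * (1 - r)))
    (hF : ∀ r ∈ Set.Ioo (0:ℝ) 1, F r = ∫ η in (1/2:ℝ)..r, 1 / |u η|)
    {r s : ℝ} (hr : r ∈ Set.Ioo (0:ℝ) 1) (hs : s ∈ Set.Ioo (0:ℝ) 1) (hrs : r ≤ s) :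
    (Real.log s - Real.log (1 - s)) - (Real.log r - Real.log (1 - r)) ≤ C10 * (F s - F r) := by
  have hIoo : ∀ x ∈ Set.Ioo (0:ℝ) 1, 0 < x * (1 - x) := fun x hx =>
    mul_pos hx.1 (by linarith [hx.2])
  have hneg : ∀ x ∈ Set.Ioo (0:ℝ) 1, u x < 0 := fun x hx => by
    nlinarith [hu_ub x (Set.Ioo_subset_Icc_self hx), hIoo x hx]
  have hne : ∀ x ∈ Set.Ioo (0:ℝ) 1, u x ≠ 0 := fun x hx => ne_of_lt (hneg x hx)
  have hhalf : (1/2:ℝ) ∈ Set.Ioo (0:ℝ) 1 := by norm_num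
  have hadd := intervalIntegral.integral_add_adjacent_intervals
    (intg_u u hu hne hhalf hr) (intg_u u hu hne hr hs)
  have hFsr : F s - F r = ∫ η in r..s, 1 / |u η| := by
    rw [hF s hs, hF r hr]; linarith [hadd]
  have hsub : Set.uIcc r s ⊆ Set.Ioo (0:ℝ) 1 := Set.ordConnected_Ioo.uIcc_subset hr hs
  have hGint : IntervalIntegrable (fun η => 1 / (η * (1 - η))) MeasureTheory.volume r s := by
    apply ContinuousOn.intervalIntegrable
    apply ContinuousOn.div continuousOn_const
    · exact continuousOn_id.mul (continuousOn_const.sub continuousOn_id)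
    · intro x hx; exact ne_of_gt (hIoo x (hsub hx))
  have hG : (∫ η in r..s, 1 / (η * (1 - η))) =
      (Real.log s - Real.log (1 - s)) - (Real.log r - Real.log (1 - r)) :=
    intervalIntegral.integral_eq_sub_of_hasDerivAt
      (fun x hx => logistic_deriv (hsub hx)) hGint
  have hmono : (∫ η in r..s, 1 / (η * (1 - η))) ≤ ∫ η in r..s, C10 * (1 / |u η|) := by
    apply intervalIntegral.integral_mono_on hrs hGint ((intg_u u hu hne hr hs).const_mul C10)
    intro x hx
    have hx' : x ∈ Set.Ioo (0:ℝ) 1 := hsub (by rw [Set.uIcc_of_le hrs]; exact hx)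
    have h1 := hu_lb x (Set.Ioo_subset_Icc_self hx')
    have h2 : |u x| = -u x := abs_of_neg (hneg x hx')
    rw [h2, mul_one_div, div_le_div_iff₀ (hIoo x hx') (by linarith [hneg x hx'])]
    nlinarith
  rw [intervalIntegral.integral_const_mul] at hmono
  rw [hFsr]
  linarith [hG, hmono]

/- STATEMENT 0: For every K > 0 there exist constants C₁, C₂ > 0 such that for every
ζ ∈ ℝ with |ζ| ≤ K and every r ∈ (0,1) one has
C₁·r(1−r) ≤ F⁻¹(F(r)+ζ)·[1 − F⁻¹(F(r)+ζ)] ≤ C₂·r(1−r). -/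
theorem stmt_0
    (u F Finv : ℝ → ℝ) (C10 C20 : ℝ)
    (hC10 : 0 < C10) (hC20 : 0 < C20)
    (hu : ContDiffOn ℝ 1 u (Set.Icc 0 1))
    (hu_lb : ∀ r ∈ Set.Icc (0:ℝ) 1, -C10 * (r * (1 - r)) ≤ u r)
    (hu_ub : ∀ r ∈ Set.Icc (0:ℝ) 1, u r ≤ -C20 * (r * (1 - r)))
    (hF : ∀ r ∈ Set.Ioo (0:ℝ) 1, F r = ∫ η in (1/2 : ℝ)..r, 1 / |u η|)
    (hF_mono : StrictMonoOn F (Set.Ioo 0 1))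
    (hFinv_mem : ∀ x : ℝ, Finv x ∈ Set.Ioo (0:ℝ) 1)
    (hFinv_right : ∀ x : ℝ, F (Finv x) = x)
    (hFinv_left : ∀ r ∈ Set.Ioo (0:ℝ) 1, Finv (F r) = r)
    (K : ℝ) (hK : 0 < K) :
    ∃ C₁ C₂ : ℝ, 0 < C₁ ∧ 0 < C₂ ∧
      ∀ ζ : ℝ, |ζ| ≤ K → ∀ r ∈ Set.Ioo (0:ℝ) 1,
        C₁ * (r * (1 - r)) ≤ Finv (F r + ζ) * (1 - Finv (F r + ζ)) ∧
        Finv (F r + ζ) * (1 - Finv (F r + ζ)) ≤ C₂ * (r * (1 - r)) := by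
  have hu' : ContinuousOn u (Set.Icc 0 1) := hu.continuousOn
  refine ⟨Real.exp (-(C10*K)), Real.exp (C10*K), Real.exp_pos _, Real.exp_pos _, ?_⟩
  intro ζ hζ r hr
  set s := Finv (F r + ζ) with hs_def
  have hs : s ∈ Set.Ioo (0:ℝ) 1 := hFinv_mem _
  have hFs : F s = F r + ζ := hFinv_right _
  have hζ' := abs_le.mp hζ
  -- bound on the difference of "G"
  have hGbound : |(Real.log s - Real.log (1-s)) - (Real.log r - Real.log (1-r))| ≤ C10 * K := by
    rcases le_total r s with h | h
    · have hk := key_ineq u F C10 C20 hC10 hC20 hu' hu_lb hu_ub hF hr hs h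
      have h1 : Real.log r ≤ Real.log s := Real.log_le_log hr.1 h
      have h2 : Real.log (1-s) ≤ Real.log (1-r) := Real.log_le_log (by linarith [hs.2]) (by linarith)
      rw [abs_of_nonneg (by linarith)]
      have hζeq : F s - F r = ζ := by linarith [hFs]
      rw [hζeq] at hk
      nlinarith
    · have hk := key_ineq u F C10 C20 hC10 hC20 hu' hu_lb hu_ub hF hs hr h
      have h1 : Real.log s ≤ Real.log r := Real.log_le_log hs.1 h
      have h2 : Real.log (1-r) ≤ Real.log (1-s) := Real.log_le_log (by linarith [hr.2]) (by linarith)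
      rw [abs_of_nonpos (by linarith)]
      have hζeq : F r - F s = -ζ := by linarith [hFs]
      rw [hζeq] at hk
      nlinarith
  -- positivity
  have hrpos : 0 < r * (1 - r) := mul_pos hr.1 (by linarith [hr.2])
  have hspos : 0 < s * (1 - s) := mul_pos hs.1 (by linarith [hs.2])
  -- bound on the difference of logs of the products
  have hlogQP : |Real.log (s * (1-s)) - Real.log (r * (1-r))| ≤ C10 * K := by
    rw [Real.log_mul (ne_of_gt hs.1) (by linarith [hs.2] : (1:ℝ) - s ≠ 0),
        Real.log_mul (ne_of_gt hr.1) (by linarith [hr.2] : (1:ℝ) - r ≠ 0)]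
    have hG := abs_le.mp hGbound
    rcases le_total r s with h | h
    · have h1 : Real.log r ≤ Real.log s := Real.log_le_log hr.1 h
      have h2 : Real.log (1-s) ≤ Real.log (1-r) := Real.log_le_log (by linarith [hs.2]) (by linarith)
      rw [abs_le]; constructor <;> linarith
    · have h1 : Real.log s ≤ Real.log r := Real.log_le_log hs.1 h
      have h2 : Real.log (1-r) ≤ Real.log (1-s) := Real.log_le_log (by linarith [hr.2]) (by linarith)
      rw [abs_le]; constructor <;> linarith
  have hQP := abs_le.mp hlogQP
  constructor
  · have : Real.exp (-(C10*K)) * (r * (1-r)) = Real.exp (-(C10*K) + Real.log (r*(1-r))) := by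
      rw [Real.exp_add, Real.exp_log hrpos]
    rw [this]
    calc Real.exp (-(C10*K) + Real.log (r*(1-r))) ≤ Real.exp (Real.log (s*(1-s))) := by
          apply Real.exp_le_exp.mpr; linarith
      _ = s * (1-s) := Real.exp_log hspos
  · have : Real.exp (C10*K) * (r * (1-r)) = Real.exp (C10*K + Real.log (r*(1-r))) := by
      rw [Real.exp_add, Real.exp_log hrpos]
    rw [this]
    calc s * (1-s) = Real.exp (Real.log (s*(1-s))) := (Real.exp_log hspos).symm
      _ ≤ Real.exp (C10*K + Real.log (r*(1-r))) := by
          apply Real.exp_le_exp.mpr; linarith
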